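/- arXiv:1202.0991 — 2 statements merged into one kernel-verified Lean document; each statement's English description precedes it below -/
import Mathlib

section
/- Let g : ℂ → ℂ be holomorphic near 0 with g(z) = e^{2πiα} z + r(z) where ‖r(z)‖ ≤ C‖z‖² on a disc, and let f(z) = z^λ with λ > 1 real (principal branch). Define h₁(z) = f⁻¹ ∘ g ∘ f(z) = e^{2πiα/λ} z (1 + r(z^λ)/(e^{2πiα}z^λ))^{1/λ}. Then for ‖z‖ sufficiently small, ‖h₁(z) − e^{2πiα/λ} z‖ ≤ (2C/λ)‖z‖^λ. -/
open Complex

lemma aux_cpow_bound {w : ℂ} {t : ℝ} (hw : ‖w‖ ≤ 1/4) (ht0 : 0 < t) (ht1 : t ≤ 1) :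
    ‖(1 + w) ^ (t : ℂ) - 1‖ ≤ 2 * t * ‖w‖ := by
  have hne : (1 : ℂ) + w ≠ 0 := by
    intro h
    have hw1 : w = -1 := by linear_combination h - (1 : ℂ)
    rw [hw1] at hw
    norm_num at hw
  rw [Complex.cpow_def_of_ne_zero hne]
  set u := Complex.log (1 + w) * (t : ℂ) with hu_def
  have hw1 : ‖w‖ < 1 := lt_of_le_of_lt hw (by norm_num)
  have hlog : ‖Complex.log (1 + w)‖ ≤ 7/6 * ‖w‖ := by
    have h := Complex.norm_log_one_add_le hw1
    have hinv : (1 - ‖w‖)⁻¹ ≤ 4/3 := by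
      rw [inv_le_comm₀ (by linarith) (by norm_num)]
      linarith
    have hnn : (0:ℝ) ≤ ‖w‖ := norm_nonneg w
    nlinarith [sq_nonneg ‖w‖]
  have hunorm : ‖u‖ = ‖Complex.log (1 + w)‖ * t := by
    rw [hu_def, norm_mul, Complex.norm_real, Real.norm_eq_abs, abs_of_pos ht0]
  have hu1 : ‖u‖ ≤ 7/24 := by
    rw [hunorm]
    have hnn : (0:ℝ) ≤ ‖w‖ := norm_nonneg w
    nlinarith
  have h1 : ‖Complex.exp u - 1 - u‖ ≤ ‖u‖ ^ 2 := by
    have := Complex.norm_exp_sub_one_sub_id_le (x := u) (by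
      linarith)
    simpa using this
  have h2 : ‖Complex.exp u - 1‖ ≤ ‖u‖ + ‖u‖ ^ 2 := by
    calc ‖Complex.exp u - 1‖ = ‖(Complex.exp u - 1 - u) + u‖ := by ring_nf
      _ ≤ ‖Complex.exp u - 1 - u‖ + ‖u‖ := norm_add_le _ _
      _ ≤ ‖u‖ ^ 2 + ‖u‖ := by linarith
      _ = ‖u‖ + ‖u‖ ^ 2 := by ring
  have hun : ‖u‖ ≤ 7/6 * t * ‖w‖ := by
    rw [hunorm]
    have hnn : (0:ℝ) ≤ ‖w‖ := norm_nonneg w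
    nlinarith
  have hsq : ‖u‖ ^ 2 ≤ (7/24) * ‖u‖ := by nlinarith [norm_nonneg u]
  have hnn : (0:ℝ) ≤ ‖w‖ := norm_nonneg w
  calc ‖Complex.exp u - 1‖ ≤ ‖u‖ + ‖u‖ ^ 2 := h2
    _ ≤ (31/24) * ‖u‖ := by linarith
    _ ≤ (31/24) * (7/6 * t * ‖w‖) := by
        have : (0:ℝ) ≤ 31/24 := by norm_num
        nlinarith
    _ ≤ 2 * t * ‖w‖ := by nlinarith

/-- with `g(z) = e^{2πiα} z + r(z)`, `‖r z‖ ≤ C‖z‖²` near `0`, and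
`f(z) = z^λ` (principal branch), the conjugate
`h₁(z) = e^{2πiα/λ} z (1 + r(z^λ)/(e^{2πiα} z^λ))^{1/λ}` satisfies
`‖h₁(z) − e^{2πiα/λ} z‖ ≤ (2C/λ)‖z‖^λ` for `‖z‖` sufficiently small. -/
theorem stmt1 (α lam C : ℝ) (hα : α ∈ Set.Ioo (0:ℝ) 1) (hlam : 1 < lam) (hC : 0 < C)
    (r : ℂ → ℂ) (R : ℝ) (hR : 0 < R)
    (hr : ∀ z : ℂ, ‖z‖ < R → ‖r z‖ ≤ C * ‖z‖ ^ 2) :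
    ∃ δ > 0, ∀ z : ℂ, z ≠ 0 → ‖z‖ < δ →
      ‖Complex.exp (2 * (Real.pi : ℂ) * Complex.I * (α : ℂ) / (lam : ℂ)) * z *
          (1 + r (z ^ (lam : ℂ)) /
              (Complex.exp (2 * (Real.pi : ℂ) * Complex.I * (α : ℂ)) * z ^ (lam : ℂ)))
            ^ ((lam : ℂ)⁻¹)
        - Complex.exp (2 * (Real.pi : ℂ) * Complex.I * (α : ℂ) / (lam : ℂ)) * z‖
        ≤ (2 * C / lam) * ‖z‖ ^ lam := by
  refine ⟨min (min 1 R) (1 / (4 * C)), by positivity, fun z hz0 hzδ => ?_⟩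
  have hz1 : ‖z‖ < 1 := lt_of_lt_of_le hzδ (le_trans (min_le_left _ _) (min_le_left _ _))
  have hzR : ‖z‖ < R := lt_of_lt_of_le hzδ (le_trans (min_le_left _ _) (min_le_right _ _))
  have hz4C : ‖z‖ < 1 / (4 * C) := lt_of_lt_of_le hzδ (min_le_right _ _)
  have hzpos : 0 < ‖z‖ := norm_pos_iff.mpr hz0
  set Z := z ^ (lam : ℂ) with hZ
  have hZnorm : ‖Z‖ = ‖z‖ ^ lam := by
    rw [hZ, Complex.norm_cpow_real]
  have hZle : ‖Z‖ ≤ ‖z‖ := by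
    rw [hZnorm]
    calc ‖z‖ ^ lam ≤ ‖z‖ ^ (1:ℝ) :=
          Real.rpow_le_rpow_of_exponent_ge hzpos hz1.le hlam.le
      _ = ‖z‖ := Real.rpow_one _
  have hZR : ‖Z‖ < R := lt_of_le_of_lt hZle hzR
  have hZpos : 0 < ‖Z‖ := by
    rw [hZnorm]; exact Real.rpow_pos_of_pos hzpos _
  set E := Complex.exp (2 * (Real.pi : ℂ) * Complex.I * (α : ℂ)) with hE
  have hEnorm : ‖E‖ = 1 := by
    rw [hE]
    have : 2 * (Real.pi : ℂ) * Complex.I * (α : ℂ)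
        = ((2 * Real.pi * α : ℝ) : ℂ) * Complex.I := by push_cast; ring
    rw [this, Complex.norm_exp_ofReal_mul_I]
  set E' := Complex.exp (2 * (Real.pi : ℂ) * Complex.I * (α : ℂ) / (lam : ℂ)) with hE'
  have hE'norm : ‖E'‖ = 1 := by
    rw [hE']
    have hlam0 : (lam : ℝ) ≠ 0 := by positivity
    have : 2 * (Real.pi : ℂ) * Complex.I * (α : ℂ) / (lam : ℂ)
        = ((2 * Real.pi * α / lam : ℝ) : ℂ) * Complex.I := by push_cast; ring
    rw [this, Complex.norm_exp_ofReal_mul_I]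
  set w := r Z / (E * Z) with hw
  have hwnorm : ‖w‖ ≤ C * ‖z‖ ^ lam := by
    rw [hw, norm_div, norm_mul, hEnorm, one_mul]
    rw [div_le_iff₀ hZpos]
    calc ‖r Z‖ ≤ C * ‖Z‖ ^ 2 := hr Z hZR
      _ = C * ‖z‖ ^ lam * ‖Z‖ := by rw [hZnorm]; ring
  have hwle : ‖w‖ ≤ 1 / 4 := by
    have h1 : C * ‖z‖ ^ lam ≤ C * ‖z‖ := by
      have := hZle; rw [hZnorm] at this
      nlinarith
    have h2 : C * ‖z‖ ≤ 1 / 4 := by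
      rw [lt_div_iff₀ (by positivity : (0:ℝ) < 4 * C)] at hz4C
      nlinarith
    linarith
  have hlampos : (0:ℝ) < lam := by linarith
  have ht0 : (0:ℝ) < lam⁻¹ := by positivity
  have ht1 : lam⁻¹ ≤ 1 := by
    rw [inv_le_one_iff₀]; right; linarith
  have hkey : ‖(1 + w) ^ ((lam : ℂ)⁻¹) - 1‖ ≤ 2 * lam⁻¹ * ‖w‖ := by
    have hcast : ((lam : ℂ))⁻¹ = ((lam⁻¹ : ℝ) : ℂ) := by push_cast; ring
    rw [hcast]
    exact aux_cpow_bound hwle ht0 ht1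
  have hfactor : E' * z * (1 + w) ^ ((lam : ℂ)⁻¹) - E' * z
      = E' * z * ((1 + w) ^ ((lam : ℂ)⁻¹) - 1) := by ring
  rw [hfactor, norm_mul, norm_mul, hE'norm, one_mul]
  have hrpow_nn : (0:ℝ) ≤ ‖z‖ ^ lam := (Real.rpow_pos_of_pos hzpos _).le
  calc ‖z‖ * ‖(1 + w) ^ ((lam : ℂ)⁻¹) - 1‖
      ≤ ‖z‖ * (2 * lam⁻¹ * ‖w‖) := by
        exact mul_le_mul_of_nonneg_left hkey hzpos.le
    _ ≤ ‖z‖ * (2 * lam⁻¹ * (C * ‖z‖ ^ lam)) := by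
        have h2 : (0:ℝ) ≤ 2 * lam⁻¹ := by positivity
        have := mul_le_mul_of_nonneg_left hwnorm h2
        exact mul_le_mul_of_nonneg_left this hzpos.le
    _ = (2 * C / lam) * ‖z‖ ^ lam * ‖z‖ := by field_simp
    _ ≤ (2 * C / lam) * ‖z‖ ^ lam :=
        mul_le_of_le_one_right (by positivity) hz1.le
end

section
/- Let h(z) = z + z^{p+1} for a fixed p ≥ 1 (or more generally a holomorphic germ h(z) = z + z^{p+1} + higher order terms). There exists z₀ ≠ 0 arbitrarily close to 0 and a neighborhood V of z₀ such that the forward iterates V, h(V), h²(V), … are pairwise disjoint and converge to 0. -/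
open Finset

namespace Stmt5

/-- real part of the Fatou coordinate `w = -1/(p z^p)` -/
noncomputable def wre (p : ℕ) (z : ℂ) : ℝ := (-((p : ℂ) * z ^ p)⁻¹).re

lemma nat_tail2 (q : ℕ) : (∑ i ∈ range q, (q+1).choose (i+1+1)) ≤ 2 ^ (q+1) := by
  have h := Nat.sum_range_choose (q+1)
  have h1 : ∑ k ∈ range (q+1+1), (q+1).choose k
      = (∑ k ∈ range (q+1), (q+1).choose (k+1)) + (q+1).choose 0 :=
    Finset.sum_range_succ' _ _
  have h2 : ∑ k ∈ range (q+1), (q+1).choose (k+1)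
      = (∑ k ∈ range q, (q+1).choose (k+1+1)) + (q+1).choose (0+1) :=
    Finset.sum_range_succ' _ _
  omega

lemma nat_tail1 (p : ℕ) : (∑ i ∈ range p, p.choose (i+1)) ≤ 2 ^ p := by
  have h := Nat.sum_range_choose p
  rw [Finset.sum_range_succ' _ p] at h
  omega

lemma sub_one_bound (p : ℕ) (u : ℂ) (hu : ‖u‖ ≤ 1) :
    ‖(1+u)^p - 1‖ ≤ ‖u‖ * 2^p := by
  have hb : (1+u)^p = ∑ k ∈ range (p+1), u^k * (p.choose k : ℂ) := by
    rw [add_comm, add_pow]; simp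
  have hsplit : (1+u)^p - 1 = ∑ i ∈ range p, u^(i+1) * (p.choose (i+1) : ℂ) := by
    rw [hb, Finset.sum_range_succ' _ p]; simp
  rw [hsplit]
  calc ‖∑ i ∈ range p, u^(i+1) * (p.choose (i+1) : ℂ)‖
      ≤ ∑ i ∈ range p, ‖u^(i+1) * (p.choose (i+1) : ℂ)‖ := norm_sum_le _ _
    _ ≤ ∑ i ∈ range p, ‖u‖ * (p.choose (i+1) : ℝ) := by
        apply Finset.sum_le_sum
        intro i _
        rw [norm_mul, norm_pow, Complex.norm_natCast]
        gcongr
        calc ‖u‖^(i+1) ≤ ‖u‖^1 := pow_le_pow_of_le_one (norm_nonneg u) hu (by omega)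
          _ = ‖u‖ := pow_one _
    _ = ‖u‖ * ∑ i ∈ range p, (p.choose (i+1) : ℝ) := by rw [Finset.mul_sum]
    _ ≤ ‖u‖ * 2^p := by
        gcongr
        calc (∑ i ∈ range p, (p.choose (i+1) : ℝ))
            = ((∑ i ∈ range p, p.choose (i+1) : ℕ) : ℝ) := by push_cast; ring
          _ ≤ ((2^p : ℕ) : ℝ) := by exact_mod_cast nat_tail1 p
          _ = 2^p := by push_cast; ring

lemma tail_bound (p : ℕ) (hp : 1 ≤ p) (u : ℂ) (hu : ‖u‖ ≤ 1) :
    ‖(1+u)^p - 1 - (p : ℂ)*u‖ ≤ ‖u‖^2 * 2^p := by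
  obtain ⟨q, rfl⟩ : ∃ q, p = q+1 := ⟨p-1, by omega⟩
  have hb : (1+u)^(q+1) = ∑ k ∈ range (q+2), u^k * ((q+1).choose k : ℂ) := by
    rw [add_comm, add_pow]; simp
  have hsplit : (1+u)^(q+1) - 1 - ((q+1 : ℕ) : ℂ)*u
      = ∑ i ∈ range q, u^(i+1+1) * ((q+1).choose (i+1+1) : ℂ) := by
    rw [hb, Finset.sum_range_succ' _ (q+1),
        Finset.sum_range_succ' (fun k => u^(k+1) * ((q+1).choose (k+1) : ℂ)) q]
    simp [Nat.choose_one_right]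
    push_cast
    ring
  rw [hsplit]
  calc ‖∑ i ∈ range q, u^(i+1+1) * ((q+1).choose (i+1+1) : ℂ)‖
      ≤ ∑ i ∈ range q, ‖u^(i+1+1) * ((q+1).choose (i+1+1) : ℂ)‖ := norm_sum_le _ _
    _ ≤ ∑ i ∈ range q, ‖u‖^2 * ((q+1).choose (i+1+1) : ℝ) := by
        apply Finset.sum_le_sum
        intro i _
        rw [norm_mul, norm_pow, Complex.norm_natCast]
        have hle : ‖u‖^(i+1+1) ≤ ‖u‖^2 := pow_le_pow_of_le_one (norm_nonneg u) hu (by omega)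
        exact mul_le_mul_of_nonneg_right hle (Nat.cast_nonneg _)
    _ = ‖u‖^2 * ∑ i ∈ range q, ((q+1).choose (i+1+1) : ℝ) := by rw [Finset.mul_sum]
    _ ≤ ‖u‖^2 * 2^(q+1) := by
        gcongr
        calc (∑ i ∈ range q, ((q+1).choose (i+1+1) : ℝ))
            = ((∑ i ∈ range q, (q+1).choose (i+1+1) : ℕ) : ℝ) := by push_cast; ring
          _ ≤ ((2^(q+1) : ℕ) : ℝ) := by exact_mod_cast nat_tail2 q
          _ = 2^(q+1) := by push_cast; ring

end Stmt5
namespace Stmt5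

lemma alg1 (P u B : ℂ) (hP : P ≠ 0) (hu : u ≠ 0) (hB : B ≠ 0) :
    -(P * (u * B))⁻¹ = -(P*u)⁻¹ + 1 - (B⁻¹ - 1 + P*u) * (P*u)⁻¹ := by
  field_simp
  ring

lemma alg2 (P u B : ℂ) (hB : B ≠ 0) :
    B⁻¹ - 1 + P*u = (-(B - 1 - P*u) + P*u*(B-1)) / B := by
  field_simp
  ring

/-- basic relation: `p‖z‖^p · Re w(z) ≤ 1`. -/
lemma key (p : ℕ) (z : ℂ) : (p : ℝ) * ‖z‖^p * wre p z ≤ 1 := by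
  have h1 : wre p z ≤ ‖-((p : ℂ) * z ^ p)⁻¹‖ :=
    Complex.re_le_norm _
  have h2 : ‖-((p : ℂ) * z ^ p)⁻¹‖ = ((p:ℝ) * ‖z‖^p)⁻¹ := by
    rw [norm_neg, norm_inv, norm_mul, norm_pow, Complex.norm_natCast]
  have h3 : (0:ℝ) ≤ (p:ℝ) * ‖z‖^p := by positivity
  calc (p : ℝ) * ‖z‖^p * wre p z ≤ (p : ℝ) * ‖z‖^p * ((p:ℝ) * ‖z‖^p)⁻¹ :=
        mul_le_mul_of_nonneg_left (h2 ▸ h1) h3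
    _ ≤ 1 := by
        rcases eq_or_ne ((p:ℝ) * ‖z‖^p) 0 with h | h
        · rw [h]; norm_num
        · rw [mul_inv_cancel₀ h]

/-- The basic step estimate in the petal. -/
lemma step (p : ℕ) (hp : 1 ≤ p) {z : ℂ} (hz : z ≠ 0)
    (hw : 2^(p+2) * ((p:ℝ)+1) ≤ wre p z) :
    z + z^(p+1) ≠ 0 ∧ wre p z + 1/2 ≤ wre p (z + z^(p+1)) := by
  have hp1 : (1:ℝ) ≤ (p:ℝ) := by exact_mod_cast hp
  have hp0 : (0:ℝ) < p := by linarith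
  have hpc : (p:ℂ) ≠ 0 := Nat.cast_ne_zero.mpr (by omega)
  set u := z^p with hu_def
  have hu0 : u ≠ 0 := pow_ne_zero _ hz
  have hun0 : 0 < ‖u‖ := norm_pos_iff.mpr hu0
  have h2pos : (0:ℝ) < 2^(p+2) * ((p:ℝ)+1) := by positivity
  have hwpos : 0 < wre p z := lt_of_lt_of_le h2pos hw
  have hkey : (p : ℝ) * ‖u‖ * wre p z ≤ 1 := by
    rw [hu_def, norm_pow]; exact key p z
  have hM : ‖u‖ * (2^(p+2) * ((p:ℝ)+1)) ≤ 1 := by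
    have h1 : ‖u‖ * (2^(p+2) * ((p:ℝ)+1)) ≤ ‖u‖ * wre p z :=
      mul_le_mul_of_nonneg_left hw (le_of_lt hun0)
    have h2 : ‖u‖ * wre p z ≤ (p:ℝ) * ‖u‖ * wre p z := by
      have h3 := mul_le_mul_of_nonneg_right
        (mul_le_mul_of_nonneg_right hp1 hun0.le) hwpos.le
      simpa using h3
    linarith
  have hMone : (1:ℝ) ≤ 2^(p+2) * ((p:ℝ)+1) := by
    have h1 : (1:ℝ) ≤ 2^(p+2) := one_le_pow₀ (by norm_num)
    nlinarith
  have hu1 : ‖u‖ ≤ 1 := by nlinarith [hun0.le]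
  have h2p2 : (2:ℝ)^(p+2) = 2^(p+1) * 2 := by ring
  have h2p1 : (2:ℝ)^(p+1) = 2^p * 2 := by ring
  have hA : ‖u‖ * (2^(p+1) * ((p:ℝ)+1)) ≤ 1/2 := by
    rw [h2p2] at hM; linarith [hM]
  have hu2 : ‖u‖ * 2^(p+1) ≤ 1/2 := by
    nlinarith [hA, mul_nonneg (mul_nonneg hun0.le
      (pow_pos (show (0:ℝ)<2 by norm_num) (p+1)).le) (le_of_lt hp0)]
  have hup : ‖u‖ * 2^p ≤ 1/2 := by
    rw [h2p1] at hu2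
    nlinarith [hu2, mul_nonneg hun0.le (pow_pos (show (0:ℝ)<2 by norm_num) p).le]
  set B := (1+u)^p with hB_def
  have hB1 : ‖B - 1‖ ≤ ‖u‖ * 2^p := sub_one_bound p u hu1
  have hBlow : (1:ℝ)/2 ≤ ‖B‖ := by
    have h4 := norm_sub_norm_le (1:ℂ) (1 - B)
    rw [sub_sub_cancel, norm_one, norm_sub_rev] at h4
    linarith
  have hB0 : B ≠ 0 := by
    intro h; rw [h] at hBlow; simp at hBlow; linarith
  have h1u : (1 : ℂ) + u ≠ 0 := fun h => hB0 (by rw [hB_def, h, zero_pow (by omega)])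
  have hz'eq : z + z^(p+1) = z * (1 + u) := by rw [hu_def]; ring
  have hz'0 : z + z^(p+1) ≠ 0 := by rw [hz'eq]; exact mul_ne_zero hz h1u
  have hz'p : (z + z^(p+1))^p = u * B := by
    rw [hz'eq, mul_pow, hB_def, hu_def]
  set T := B⁻¹ - 1 + (p:ℂ)*u with hT_def
  have hTbound : ‖T‖ ≤ ‖u‖^2 * 2^p * ((p:ℝ)+1) * 2 := by
    have hnum : ‖-(B - 1 - (p:ℂ)*u) + (p:ℂ)*u*(B-1)‖ ≤ ‖u‖^2 * 2^p * ((p:ℝ)+1) := by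
      calc ‖-(B - 1 - (p:ℂ)*u) + (p:ℂ)*u*(B-1)‖
          ≤ ‖-(B - 1 - (p:ℂ)*u)‖ + ‖(p:ℂ)*u*(B-1)‖ := norm_add_le _ _
        _ ≤ ‖u‖^2 * 2^p + (p:ℝ) * ‖u‖ * (‖u‖ * 2^p) := by
            rw [norm_neg, norm_mul, norm_mul, Complex.norm_natCast]
            have h2 : ‖B - 1 - (p:ℂ)*u‖ ≤ ‖u‖^2 * 2^p := tail_bound p hp u hu1
            have h3 : (p:ℝ) * ‖u‖ * ‖B - 1‖ ≤ (p:ℝ) * ‖u‖ * (‖u‖ * 2^p) := by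
              apply mul_le_mul_of_nonneg_left hB1; positivity
            linarith
        _ = ‖u‖^2 * 2^p * ((p:ℝ)+1) := by ring
    rw [hT_def, alg2 _ _ _ hB0, norm_div, div_le_iff₀ (lt_of_lt_of_le (by norm_num) hBlow)]
    calc ‖-(B - 1 - (p:ℂ)*u) + (p:ℂ)*u*(B-1)‖ ≤ ‖u‖^2 * 2^p * ((p:ℝ)+1) := hnum
      _ = (‖u‖^2 * 2^p * ((p:ℝ)+1) * 2) * (1/2) := by ring
      _ ≤ (‖u‖^2 * 2^p * ((p:ℝ)+1) * 2) * ‖B‖ := by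
          apply mul_le_mul_of_nonneg_left hBlow; positivity
  have hiden : -((p:ℂ) * (u * B))⁻¹ = -((p:ℂ)*u)⁻¹ + 1 - T * ((p:ℂ)*u)⁻¹ := by
    rw [hT_def]; exact alg1 _ _ _ hpc hu0 hB0
  have hwre' : wre p (z + z^(p+1)) = wre p z + 1 - (T * ((p:ℂ)*u)⁻¹).re := by
    have h6 : wre p (z + z^(p+1)) = (-((p:ℂ) * (u * B))⁻¹).re := by
      rw [show wre p (z + z^(p+1)) = (-((p:ℂ) * (z + z^(p+1))^p)⁻¹).re from rfl, hz'p]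
    have h5 : wre p z = (-((p:ℂ)*u)⁻¹).re := by rw [hu_def]; rfl
    rw [h6, hiden, h5]
    simp [Complex.sub_re, Complex.add_re, Complex.one_re]
  have hTu : ‖T * ((p:ℂ)*u)⁻¹‖ ≤ 1/2 := by
    rw [norm_mul, norm_inv, norm_mul, Complex.norm_natCast, ← div_eq_mul_inv,
      div_le_iff₀ (by positivity : (0:ℝ) < (p:ℝ) * ‖u‖)]
    calc ‖T‖ ≤ ‖u‖^2 * 2^p * ((p:ℝ)+1) * 2 := hTbound
      _ = ‖u‖ * (‖u‖ * (2^(p+1) * ((p:ℝ)+1))) := by rw [h2p1]; ring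
      _ ≤ ‖u‖ * (1/2) := mul_le_mul_of_nonneg_left hA hun0.le
      _ ≤ 1/2 * ((p:ℝ) * ‖u‖) := by nlinarith [mul_le_mul_of_nonneg_right hp1 hun0.le]
  have hre : (T * ((p:ℂ)*u)⁻¹).re ≤ 1/2 :=
    le_trans (Complex.re_le_norm _) hTu
  exact ⟨hz'0, by rw [hwre']; linarith⟩

end Stmt5
namespace Stmt5

lemma iter_petal (p : ℕ) (hp : 1 ≤ p) {z : ℂ} (hz : z ≠ 0)
    (hw : 2^(p+2) * ((p:ℝ)+1) ≤ wre p z) (n : ℕ) :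
    (fun z : ℂ => z + z^(p+1))^[n] z ≠ 0 ∧
      wre p z + (n:ℝ)/2 ≤ wre p ((fun z : ℂ => z + z^(p+1))^[n] z) := by
  induction n with
  | zero => exact ⟨hz, by simp⟩
  | succ n ih =>
    obtain ⟨h0, h1⟩ := ih
    have hw' : 2^(p+2) * ((p:ℝ)+1) ≤ wre p ((fun z : ℂ => z + z^(p+1))^[n] z) := by
      have : (0:ℝ) ≤ (n:ℝ)/2 := by positivity
      linarith
    obtain ⟨s0, s1⟩ := step p hp h0 hw'
    simp only [Function.iterate_succ_apply']
    refine ⟨s0, ?_⟩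
    push_cast
    linarith

lemma inj_aux (p : ℕ) (hp : 1 ≤ p) {a b : ℂ}
    (ha : ‖a‖^p * (2*((p:ℝ)+1)) ≤ 1) (hb : ‖b‖^p * (2*((p:ℝ)+1)) ≤ 1)
    (h : a + a^(p+1) = b + b^(p+1)) : a = b := by
  by_contra hne
  set S : ℂ := ∑ i ∈ Finset.range (p+1), b^i * a^((p+1)-1-i) with hS_def
  have h1 : (a - b) * (1 + S) = 0 := by
    rw [hS_def]
    linear_combination h - geom_sum₂_mul b a (p+1)
  have h2 : (1 : ℂ) + S = 0 := by
    rcases mul_eq_zero.mp h1 with h3 | h3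
    · exact absurd (sub_eq_zero.mp h3) hne
    · exact h3
  have hS1 : ‖S‖ = 1 := by
    have : S = -1 := by linear_combination h2
    rw [this, norm_neg, norm_one]
  set m : ℝ := max ‖a‖ ‖b‖ with hm_def
  have hm0 : 0 ≤ m := le_trans (norm_nonneg a) (le_max_left _ _)
  have hmp : m^p * (2*((p:ℝ)+1)) ≤ 1 := by
    rcases max_choice ‖a‖ ‖b‖ with h4 | h4 <;> rw [hm_def, h4]
    · exact ha
    · exact hb
  have hSb : ‖S‖ ≤ ((p:ℝ)+1) * m^p := by
    rw [hS_def]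
    calc ‖∑ i ∈ Finset.range (p+1), b^i * a^((p+1)-1-i)‖
        ≤ ∑ i ∈ Finset.range (p+1), ‖b^i * a^((p+1)-1-i)‖ := norm_sum_le _ _
      _ ≤ ∑ _i ∈ Finset.range (p+1), m^p := by
          apply Finset.sum_le_sum
          intro i hi
          have hi' : i ≤ p := by
            have := Finset.mem_range.mp hi; omega
          rw [norm_mul, norm_pow, norm_pow]
          calc ‖b‖^i * ‖a‖^((p+1)-1-i)
              ≤ m^i * m^((p+1)-1-i) := by
                apply mul_le_mul
                · exact pow_le_pow_left₀ (norm_nonneg b) (le_max_right _ _) i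
                · exact pow_le_pow_left₀ (norm_nonneg a) (le_max_left _ _) _
                · positivity
                · positivity
            _ = m^(i + ((p+1)-1-i)) := (pow_add m _ _).symm
            _ = m^p := by congr 1; omega
      _ = ((p:ℝ)+1) * m^p := by
          rw [Finset.sum_const, Finset.card_range, nsmul_eq_mul]
          push_cast; ring
  rw [hS1] at hSb
  nlinarith [pow_nonneg hm0 p]

lemma petal_small (p : ℕ) (hp : 1 ≤ p) {y : ℂ}
    (hw : 2^(p+2)*((p:ℝ)+1) ≤ wre p y) :
    ‖y‖^p * (2*((p:ℝ)+1)) ≤ 1 := by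
  have hk := key p y
  have hp1 : (1:ℝ) ≤ (p:ℝ) := by exact_mod_cast hp
  have h4 : (4:ℝ) ≤ 2^(p+2) := by
    calc (4:ℝ) = 2^2 := by norm_num
      _ ≤ 2^(p+2) := pow_le_pow_right₀ (by norm_num) (by omega)
  have hwpos : 0 < wre p y := lt_of_lt_of_le (by positivity) hw
  have hyp : (0:ℝ) ≤ ‖y‖^p := by positivity
  have h5 : 2*((p:ℝ)+1) ≤ (p:ℝ) * wre p y := by
    nlinarith [mul_nonneg (sub_nonneg.mpr h4) (by positivity : (0:ℝ) ≤ (p:ℝ)+1),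
      mul_nonneg (sub_nonneg.mpr hp1) hwpos.le]
  nlinarith [mul_le_mul_of_nonneg_left h5 hyp]

lemma iter_inj (p : ℕ) (hp : 1 ≤ p) (n : ℕ) {a b : ℂ}
    (ha0 : a ≠ 0) (haw : 2^(p+2)*((p:ℝ)+1) ≤ wre p a)
    (hb0 : b ≠ 0) (hbw : 2^(p+2)*((p:ℝ)+1) ≤ wre p b)
    (h : (fun z : ℂ => z + z^(p+1))^[n] a = (fun z : ℂ => z + z^(p+1))^[n] b) :
    a = b := by
  induction n with
  | zero => simpa using h
  | succ n ih =>
    rw [Function.iterate_succ_apply', Function.iterate_succ_apply'] at h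
    obtain ⟨ha0', haw'⟩ := iter_petal p hp ha0 haw n
    obtain ⟨hb0', hbw'⟩ := iter_petal p hp hb0 hbw n
    have han : (0:ℝ) ≤ (n:ℝ)/2 := by positivity
    have haw'' : 2^(p+2)*((p:ℝ)+1) ≤ wre p ((fun z : ℂ => z + z^(p+1))^[n] a) := by linarith
    have hbw'' : 2^(p+2)*((p:ℝ)+1) ≤ wre p ((fun z : ℂ => z + z^(p+1))^[n] b) := by linarith
    have heq : (fun z : ℂ => z + z^(p+1))^[n] a = (fun z : ℂ => z + z^(p+1))^[n] b :=
      inj_aux p hp (petal_small p hp haw'') (petal_small p hp hbw'') h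
    exact ih heq

end Stmt5
open Stmt5 in
/-- the parabolic germ `h(z) = z + z^{p+1}`, `p ≥ 1`, has wandering
neighborhoods: arbitrarily close to `0` there is `z₀ ≠ 0` and a neighborhood `V`
of `z₀` whose forward iterated images are pairwise disjoint and converge to `0`. -/
theorem stmt5 (p : ℕ) (hp : 1 ≤ p) :
    ∀ ε > 0, ∃ z₀ : ℂ, z₀ ≠ 0 ∧ ‖z₀‖ < ε ∧
      ∃ V : Set ℂ, IsOpen V ∧ z₀ ∈ V ∧
        (∀ i j : ℕ, i ≠ j →
          Disjoint ((fun z : ℂ => z + z ^ (p+1))^[i] '' V)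
            ((fun z : ℂ => z + z ^ (p+1))^[j] '' V)) ∧
        (∀ δ > 0, ∃ N : ℕ, ∀ n ≥ N,
          (fun z : ℂ => z + z ^ (p+1))^[n] '' V ⊆ Metric.ball 0 δ) := by
  intro ε hε
  have hp1 : (1:ℝ) ≤ (p:ℝ) := by exact_mod_cast hp
  have hp0 : (0:ℝ) < (p:ℝ) := by linarith
  have hpc : (p:ℂ) ≠ 0 := Nat.cast_ne_zero.mpr (by omega)
  set M : ℝ := 2^(p+2)*((p:ℝ)+1) with hM_def
  have hMpos : 0 < M := by positivity
  set s : ℝ := min (ε/2) (1/((p:ℝ)*(M+1))) with hs_def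
  have hspos : 0 < s := lt_min (by linarith) (by positivity)
  have hs1 : s ≤ 1/((p:ℝ)*(M+1)) := min_le_right _ _
  have hsle1 : s ≤ 1 := by
    have h1 : (1:ℝ) ≤ (p:ℝ)*(M+1) := by nlinarith
    calc s ≤ 1/((p:ℝ)*(M+1)) := hs1
      _ ≤ 1 := by rw [div_le_one (by positivity)]; exact h1
  have hsp : s^p ≤ s := pow_le_of_le_one hspos.le hsle1 (by omega)
  -- the base point z₀ on the attracting direction
  set z₀ : ℂ := (s:ℂ) * Complex.exp ((Real.pi/(p:ℝ) : ℝ) * Complex.I) with hz₀def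
  have hz₀ : z₀ ≠ 0 := mul_ne_zero (by exact_mod_cast hspos.ne') (Complex.exp_ne_zero _)
  have hz₀norm : ‖z₀‖ = s := by
    rw [hz₀def, norm_mul]
    rw [Complex.norm_exp_ofReal_mul_I, mul_one,
      Complex.norm_real, Real.norm_eq_abs, abs_of_pos hspos]
  have hz₀p : z₀^p = -((s:ℂ)^p) := by
    rw [hz₀def, mul_pow, ← Complex.exp_nat_mul]
    have harg : (p:ℂ) * ((Real.pi/(p:ℝ) : ℝ) * Complex.I) = (Real.pi : ℂ) * Complex.I := by
      push_cast
      field_simp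
    rw [harg, Complex.exp_pi_mul_I]
    ring
  set W : ℝ := ((p:ℝ)*s^p)⁻¹ with hW_def
  have hspp : (0:ℝ) < s^p := pow_pos hspos p
  have hwz₀ : wre p z₀ = W := by
    rw [wre, hz₀p]
    have h2 : ((p:ℂ) * -((s:ℂ)^p)) = -((((p:ℝ) * s^p : ℝ)):ℂ) := by push_cast; ring
    rw [h2, inv_neg, neg_neg, ← Complex.ofReal_inv, Complex.ofReal_re, hW_def]
  have hW : M + 1 ≤ W := by
    have h2 : (p:ℝ)*s^p ≤ (p:ℝ)*s := mul_le_mul_of_nonneg_left hsp hp0.le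
    have h3 : (p:ℝ)*s ≤ (p:ℝ)*(1/((p:ℝ)*(M+1))) := mul_le_mul_of_nonneg_left hs1 hp0.le
    have h4 : (p:ℝ)*(1/((p:ℝ)*(M+1))) = (M+1)⁻¹ := by
      field_simp
    have h1 : (p:ℝ)*s^p ≤ (M+1)⁻¹ := by linarith
    calc M+1 = ((M+1)⁻¹)⁻¹ := (inv_inv _).symm
      _ ≤ W := by
        rw [hW_def]
        exact inv_anti₀ (by positivity) h1
  -- the wandering neighborhood
  set V : Set ℂ := {z : ℂ | z ≠ 0} ∩ (wre p) ⁻¹' (Set.Ioo (W - 8⁻¹) (W + 8⁻¹)) with hVdef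
  have hmem : ∀ z ∈ V, z ≠ 0 ∧ M ≤ wre p z ∧ W - 8⁻¹ < wre p z ∧ wre p z < W + 8⁻¹ := by
    intro z hzV
    obtain ⟨hz1, hz2⟩ := hzV
    have hz2' : wre p z ∈ Set.Ioo (W - 8⁻¹) (W + 8⁻¹) := hz2
    exact ⟨hz1, by have := hz2'.1; linarith, hz2'.1, hz2'.2⟩
  refine ⟨z₀, hz₀, by rw [hz₀norm]; linarith [min_le_left (ε/2) (1/((p:ℝ)*(M+1)))], V, ?_, ?_, ?_, ?_⟩
  · -- openness
    apply ContinuousOn.isOpen_inter_preimage ?_ isOpen_ne isOpen_Ioo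
    have hc : ContinuousOn (fun z : ℂ => -((p:ℂ)*z^p)⁻¹) {z : ℂ | z ≠ 0} :=
      (((continuous_const.mul (continuous_pow p)).continuousOn).inv₀
        (fun z hz => mul_ne_zero hpc (pow_ne_zero _ hz))).neg
    exact Complex.continuous_re.comp_continuousOn hc
  · -- z₀ ∈ V
    refine ⟨hz₀, ?_⟩
    have : wre p z₀ ∈ Set.Ioo (W - 8⁻¹) (W + 8⁻¹) := by
      rw [hwz₀]
      constructor <;> [linarith; linarith] <;> norm_num
    exact this
  · -- disjointness
    have hdisj : ∀ i j : ℕ, i < j →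
        Disjoint ((fun z : ℂ => z + z ^ (p+1))^[i] '' V)
          ((fun z : ℂ => z + z ^ (p+1))^[j] '' V) := by
      intro i j hij
      rw [Set.disjoint_left]
      rintro x ⟨v, hv, rfl⟩ ⟨v', hv', hx⟩
      obtain ⟨m, hm1, rfl⟩ : ∃ m, 1 ≤ m ∧ j = i + m := ⟨j - i, by omega, by omega⟩
      rw [Function.iterate_add_apply] at hx
      obtain ⟨hv0, hvM, hvlo, hvhi⟩ := hmem v hv
      obtain ⟨hv'0, hv'M, hv'lo, hv'hi⟩ := hmem v' hv'
      obtain ⟨hm0, hmw⟩ := iter_petal p hp hv'0 hv'M m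
      have hmw' : M ≤ wre p ((fun z : ℂ => z + z ^ (p+1))^[m] v') := by
        have : (0:ℝ) ≤ (m:ℝ)/2 := by positivity
        linarith
      have heq : (fun z : ℂ => z + z ^ (p+1))^[m] v' = v :=
        iter_inj p hp i hm0 hmw' hv0 hvM hx
      rw [heq] at hmw
      have hm1' : (1:ℝ) ≤ (m:ℝ) := by exact_mod_cast hm1
      linarith
    intro i j hij
    rcases hij.lt_or_gt with h | h
    · exact hdisj i j h
    · exact (hdisj j i h).symm
  · -- convergence to 0
    intro δ hδ
    set d : ℝ := min δ 1 with hd_def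
    have hd0 : 0 < d := lt_min hδ one_pos
    have hdp : 0 < d^p := pow_pos hd0 p
    obtain ⟨N, hN⟩ := exists_nat_gt (2/(d^p))
    refine ⟨N, ?_⟩
    rintro n hn x ⟨v, hv, rfl⟩
    obtain ⟨hv0, hvM, _, _⟩ := hmem v hv
    obtain ⟨hy0, hyw⟩ := iter_petal p hp hv0 hvM n
    set y := (fun z : ℂ => z + z ^ (p+1))^[n] v with hy_def
    have hnN : (N:ℝ) ≤ (n:ℝ) := by exact_mod_cast hn
    have h7 : 2/(d^p) < (n:ℝ) := lt_of_lt_of_le hN hnN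
    have h8' : 2 < (n:ℝ) * d^p := (div_lt_iff₀ hdp).mp h7
    have hwv : 0 < wre p v := lt_of_lt_of_le hMpos hvM
    have hwy : 0 < wre p y := by
      have : (0:ℝ) ≤ (n:ℝ)/2 := by positivity
      linarith
    have h8'' : (1:ℝ) < d^p * wre p y := by
      have c1 := mul_le_mul_of_nonneg_left hyw hdp.le
      have c2 : 0 ≤ d^p * wre p v := le_of_lt (mul_pos hdp hwv)
      rw [mul_add] at c1
      linarith [c1, c2, h8']
    have hkey := key p y
    have h9 : ‖y‖^p * wre p y ≤ 1 := by
      have h9a := mul_le_mul_of_nonneg_right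
        (mul_le_mul_of_nonneg_right hp1 (pow_nonneg (norm_nonneg y) p)) hwy.le
      rw [one_mul] at h9a
      exact le_trans h9a hkey
    have hyn : ‖y‖^p < d^p := by
      by_contra hc
      push_neg at hc
      have c3 := mul_le_mul_of_nonneg_right hc hwy.le
      linarith [c3, h9, h8'']
    have hlt : ‖y‖ < d := by
      by_contra hc
      push_neg at hc
      exact absurd hyn (not_lt.mpr (pow_le_pow_left₀ hd0.le hc p))
    rw [Metric.mem_ball, dist_zero_right]
    exact lt_of_lt_of_le hlt (min_le_left _ _)
end
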